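/- For every finite simple graph G, the chromatic number of G is at most its b-chromatic number, which in turn is at most its m-degree m(G). -/

import Mathlib

open SimpleGraph

/-- A proper colouring of `G` given as a function to `ℕ`. -/
def IsProperColoring {V : Type*} (G : SimpleGraph V) (c : V → ℕ) : Prop :=
  ∀ u v, G.Adj u v → c u ≠ c v

/-- A vertex `v` is b-chromatic under `c`: it has a neighbour of every used colour
other than its own. -/
def IsBVertex {V : Type*} (G : SimpleGraph V) (c : V → ℕ) (v : V) : Prop :=
  ∀ j ∈ Set.range c, j ≠ c v → ∃ u, G.Adj v u ∧ c u = j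

/-- A b-colouring: a proper colouring in which every colour class contains a
b-chromatic vertex. -/
def IsBColoring {V : Type*} (G : SimpleGraph V) (c : V → ℕ) : Prop :=
  IsProperColoring G c ∧ ∀ j ∈ Set.range c, ∃ v, c v = j ∧ IsBVertex G c v

/-- The number of colours used by a colouring. -/
noncomputable def numColors {V : Type*} (c : V → ℕ) : ℕ := (Set.range c).ncard

/-- The b-chromatic number: the maximum number of colours in a b-colouring. -/
noncomputable def bChromaticNumber {V : Type*} (G : SimpleGraph V) : ℕ :=
  sSup {k | ∃ c, IsBColoring G c ∧ numColors c = k}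

/-- The m-degree `m(G)`: the largest `k` such that `G` has at least `k` vertices of
degree at least `k - 1`. -/
noncomputable def mDegree {V : Type*} (G : SimpleGraph V) : ℕ :=
  sSup {k | k ≤ {v : V | k ≤ (G.neighborSet v).ncard + 1}.ncard}

/-- The set of dense vertices: those of degree at least `m(G) - 1`. -/
def denseSet {V : Type*} (G : SimpleGraph V) : Set V :=
  {v | mDegree G ≤ (G.neighborSet v).ncard + 1}

/-- A graph is tight if it has exactly `m(G)` dense vertices, each of degree
exactly `m(G) - 1`. -/
def IsTight {V : Type*} (G : SimpleGraph V) : Prop :=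
  (denseSet G).ncard = mDegree G ∧
    ∀ v ∈ denseSet G, (G.neighborSet v).ncard = mDegree G - 1

/-- A fall colouring: a proper colouring in which every vertex has a neighbour of
every used colour other than its own. -/
def IsFallColoring {V : Type*} (G : SimpleGraph V) (c : V → ℕ) : Prop :=
  IsProperColoring G c ∧ ∀ v, ∀ j ∈ Set.range c, j ≠ c v → ∃ u, G.Adj v u ∧ c u = j

/-- The fall spectrum: the set of numbers of colours of fall colourings of `G`. -/
def fallSpectrum {V : Type*} (G : SimpleGraph V) : Set ℕ :=
  {k | ∃ c, IsFallColoring G c ∧ numColors c = k}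

/-- The outer boundary of a vertex set: vertices outside it with a neighbour in it. -/
def outerBoundary {V : Type*} (G : SimpleGraph V) (T : Set V) : Set V :=
  {s | s ∉ T ∧ ∃ t ∈ T, G.Adj s t}

lemma exists_bcoloring {V : Type*} [Fintype V] (G : SimpleGraph V) :
    ∃ c, IsBColoring G c := by
  classical
  obtain ⟨f, hf⟩ := exists_injective_nat V
  set S : Set ℕ := {n | ∃ c, IsProperColoring G c ∧ numColors c = n} with hSdef
  have hS : S.Nonempty := ⟨numColors f, f, fun u v h he => (G.ne_of_adj h) (hf he), rfl⟩
  obtain ⟨c, hc, hnc⟩ := Nat.sInf_mem hS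
  refine ⟨c, hc, ?_⟩
  by_contra h
  push_neg at h
  obtain ⟨j, hj, hbad⟩ := h
  have hch : ∀ v, c v = j → ∃ j', j' ∈ Set.range c ∧ j' ≠ j ∧ ∀ u, G.Adj v u → c u ≠ j' := by
    intro v hv
    have h1 : ¬ IsBVertex G c v := fun hb => hbad v hv hb
    unfold IsBVertex at h1
    push_neg at h1
    obtain ⟨j', hj1, hj2, hj3⟩ := h1
    exact ⟨j', hj1, by rwa [hv] at hj2, hj3⟩
  set g : V → ℕ := fun v => if h : c v = j then (hch v h).choose else c v with hg
  have hgval : ∀ v, (c v = j ∧ g v ≠ j ∧ g v ∈ Set.range c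
      ∧ ∀ u, G.Adj v u → c u ≠ g v) ∨ (c v ≠ j ∧ g v = c v) := by
    intro v
    by_cases h : c v = j
    · left
      have hspec := (hch v h).choose_spec
      have hgv : g v = (hch v h).choose := by simp [hg, h]
      exact ⟨h, hgv ▸ hspec.2.1, hgv ▸ hspec.1, hgv ▸ hspec.2.2⟩
    · right; exact ⟨h, by simp [hg, h]⟩
  have hgproper : IsProperColoring G g := by
    intro u v hadj heq
    rcases hgval u with ⟨hu1, _, _, hu4⟩ | ⟨hu1, hu2⟩ <;>
      rcases hgval v with ⟨hv1, _, _, hv4⟩ | ⟨hv1, hv2⟩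
    · exact hc u v hadj (hu1.trans hv1.symm)
    · exact hu4 v hadj (hv2 ▸ heq).symm
    · exact hv4 u hadj.symm (hu2 ▸ heq)
    · exact hc u v hadj (hu2 ▸ hv2 ▸ heq)
  have hsub : Set.range g ⊆ Set.range c \ {j} := by
    rintro x ⟨v, rfl⟩
    rcases hgval v with ⟨_, h3, h4, _⟩ | ⟨h1, h2⟩
    · exact ⟨h4, h3⟩
    · exact ⟨h2 ▸ Set.mem_range_self v, by simp [h2, h1]⟩
  have hfin : (Set.range c).Finite := Set.finite_range c
  have hlt : numColors g < numColors c := by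
    calc (Set.range g).ncard ≤ (Set.range c \ {j}).ncard :=
          Set.ncard_le_ncard hsub hfin.diff
      _ < (Set.range c).ncard := Set.ncard_diff_singleton_lt_of_mem hj hfin
  have hmem : numColors g ∈ S := ⟨g, hgproper, rfl⟩
  have := Nat.sInf_le hmem
  omega

lemma bset_le_m {V : Type*} [Fintype V] (G : SimpleGraph V) {k : ℕ}
    (hk : k ∈ {k | ∃ c, IsBColoring G c ∧ numColors c = k}) : k ≤ mDegree G := by
  classical
  obtain ⟨c, ⟨hcp, hcb⟩, rfl⟩ := hk
  set k := numColors c with hkdef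
  have hmem : k ∈ {k | k ≤ {v : V | k ≤ (G.neighborSet v).ncard + 1}.ncard} := by
    rcases Nat.eq_zero_or_pos k with h0 | hpos
    · simp [h0]
    · choose bv hbv1 hbv2 using hcb
      have hrfin : (Set.range c).Finite := Set.finite_range c
      have hrne : (Set.range c).Nonempty := by
        have hne : (Set.range c).ncard ≠ 0 := by exact hpos.ne'
        exact Set.nonempty_of_ncard_ne_zero hne
      obtain ⟨j0, hj0⟩ := hrne
      have hdeg : ∀ j (hj : j ∈ Set.range c), k ≤ (G.neighborSet (bv j hj)).ncard + 1 := by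
        intro j hj
        set v := bv j hj with hv
        have hIsB := hbv2 j hj
        choose nb hnb1 hnb2 using hIsB
        set nbt : ℕ → V := fun j' =>
          if h : j' ∈ Set.range c ∧ j' ≠ c v then nb j' h.1 h.2 else v with hnbt
        have hcard : (Set.range c \ {c v}).ncard ≤ (G.neighborSet v).ncard := by
          apply Set.ncard_le_ncard_of_injOn nbt
          · rintro x ⟨hx1, hx2⟩
            simp only [hnbt, dif_pos (And.intro hx1 (by simpa using hx2))]
            exact hnb1 x hx1 (by simpa using hx2)
          · rintro a ⟨ha1, ha2⟩ b ⟨hb1, hb2⟩ hab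
            simp only [hnbt, dif_pos (And.intro ha1 (by simpa using ha2)),
              dif_pos (And.intro hb1 (by simpa using hb2))] at hab
            have := congrArg c hab
            rwa [hnb2 a ha1 (by simpa using ha2), hnb2 b hb1 (by simpa using hb2)] at this
        have hcv : c v ∈ Set.range c := Set.mem_range_self v
        have : (Set.range c \ {c v}).ncard = k - 1 := by
          rw [Set.ncard_diff_singleton_of_mem hcv]
          rfl
        omega
      set dvt : ℕ → V := fun j => if h : j ∈ Set.range c then bv j h else bv j0 hj0 with hdvt
      have : k ≤ {v : V | k ≤ (G.neighborSet v).ncard + 1}.ncard := by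
        rw [hkdef]
        show (Set.range c).ncard ≤ _
        apply Set.ncard_le_ncard_of_injOn dvt
        · intro j hj
          simp only [hdvt, dif_pos hj]
          exact hdeg j hj
        · intro a ha b hb hab
          simp only [hdvt, dif_pos ha, dif_pos hb] at hab
          have := congrArg c hab
          rwa [hbv1 a ha, hbv1 b hb] at this
      exact this
  have hbdd : BddAbove {k | k ≤ {v : V | k ≤ (G.neighborSet v).ncard + 1}.ncard} := by
    refine ⟨Nat.card V, fun n hn => ?_⟩
    calc n ≤ _ := hn
      _ ≤ (Set.univ : Set V).ncard := Set.ncard_le_ncard (Set.subset_univ _) Set.finite_univ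
      _ = Nat.card V := by rw [Set.ncard_univ]
  exact le_csSup hbdd hmem

theorem stmt0 {V : Type*} [Fintype V] (G : SimpleGraph V) :
    G.chromaticNumber ≤ (bChromaticNumber G : ℕ∞) ∧ bChromaticNumber G ≤ mDegree G := by
  classical
  obtain ⟨c, hc⟩ := exists_bcoloring G
  have hbdd : BddAbove {k | ∃ c, IsBColoring G c ∧ numColors c = k} :=
    ⟨mDegree G, fun n hn => bset_le_m G hn⟩
  have hle : numColors c ≤ bChromaticNumber G := le_csSup hbdd ⟨c, hc, rfl⟩
  constructor
  · have hfin : (Set.range c).Finite := Set.finite_range c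
    have : Fintype (Set.range c) := hfin.fintype
    have hcol : G.Colorable (Fintype.card (Set.range c)) := by
      apply SimpleGraph.Coloring.colorable
      exact SimpleGraph.Coloring.mk (fun v => ⟨c v, Set.mem_range_self v⟩)
        (fun hadj heq => hc.1 _ _ hadj (congrArg Subtype.val heq))
    have hcard : Fintype.card (Set.range c) = numColors c := by
      rw [numColors, ← Nat.card_coe_set_eq, Nat.card_eq_fintype_card]
    rw [hcard] at hcol
    calc G.chromaticNumber ≤ (numColors c : ℕ∞) := hcol.chromaticNumber_le
      _ ≤ (bChromaticNumber G : ℕ∞) := by exact_mod_cast hle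
  · exact csSup_le (⟨numColors c, c, hc, rfl⟩) (fun n hn => bset_le_m G hn)
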